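/- Let $X$ be an $n \times n$ lower Hessenberg matrix with distinct eigenvalues $\lambda_1, \dots, \lambda_n$, let $L$ be a lower unipotent matrix with $L^{-1} X L = \epsilon_\Lambda$ (the upper bidiagonal matrix with diagonal $\Lambda$ and superdiagonal $1$'s), and let $U$ be the upper triangular matrix with $u_{ij} = \prod_{k=1}^{i-1}(\lambda_j - \lambda_k)$ for $i \le j$. Then $X (L U) = (L U) \operatorname{diag}(\lambda_1, \dots, \lambda_n)$; i.e., the columns of $LU$ are eigenvectors of $X$. -/

import Mathlib

/-- If a lower Hessenberg matrix `X` is conjugated by a lower unipotent `L` to the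
upper bidiagonal matrix `ε_Λ` with distinct diagonal `λ`, then the columns of `L * U`
(with `U` the explicit upper triangular matrix) are eigenvectors of `X`. -/
theorem hessenberg_eigenvectors_LU (n : ℕ) (X : Matrix (Fin n) (Fin n) ℝ)
    (hHess : ∀ i j : Fin n, (j : ℕ) > (i : ℕ) + 1 → X i j = 0)
    (lam : Fin n → ℝ) (hdist : Function.Injective lam)
    (L : Matrix (Fin n) (Fin n) ℝ)
    (hLlow : ∀ i j : Fin n, i < j → L i j = 0)
    (hLdiag : ∀ i : Fin n, L i i = 1)
    (eps : Matrix (Fin n) (Fin n) ℝ)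
    (heps : ∀ i j : Fin n, eps i j =
      if i = j then lam i else if (j : ℕ) = (i : ℕ) + 1 then 1 else 0)
    (hconj : L⁻¹ * X * L = eps)
    (U : Matrix (Fin n) (Fin n) ℝ)
    (hU : ∀ i j : Fin n, U i j =
      if i ≤ j then ∏ k ∈ Finset.Iio i, (lam j - lam k) else 0) :
    X * (L * U) = (L * U) * Matrix.diagonal lam := by
  have hdet : IsUnit L.det := by
    rw [Matrix.det_of_lowerTriangular L (fun i j h => hLlow i j h)]
    simp [hLdiag]
  have hXL : X * L = L * eps := by
    have := congrArg (fun M => L * M) hconj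
    simpa [← Matrix.mul_assoc, Matrix.mul_nonsing_inv L hdet] using this
  have key : eps * U = U * Matrix.diagonal lam := by
    ext i j
    rw [Matrix.mul_diagonal, Matrix.mul_apply]
    by_cases hi : (i : ℕ) + 1 < n
    · set i' : Fin n := ⟨(i : ℕ) + 1, hi⟩ with hi'
      have hne : i' ≠ i := by
        simp [Fin.ext_iff, hi']
      have hsum : (∑ k, eps i k * U k j) = lam i * U i j + U i' j := by
        have hpt : ∀ k, eps i k * U k j =
            (if k = i then lam i * U i j else 0) + (if k = i' then U i' j else 0) := by
          intro k
          rcases eq_or_ne k i with rfl | h1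
          · simp [heps, hne.symm, Ne.symm hne, hne]
          · rcases eq_or_ne k i' with heq | h2
            · have hk : (k : ℕ) = (i : ℕ) + 1 := by rw [heq]
              simp [heps, h1, Ne.symm h1, hk, heq, hne, Ne.symm hne, show (i' : ℕ) = (i : ℕ) + 1 from rfl]
            · have : (k : ℕ) ≠ (i : ℕ) + 1 := fun h => h2 (Fin.ext h)
              simp [heps, h1, Ne.symm h1, h2, this]
        rw [Finset.sum_congr rfl (fun k _ => hpt k), Finset.sum_add_distrib]
        simp
      rw [hsum]
      by_cases hij : i ≤ j
      · rcases eq_or_lt_of_le hij with rfl | hlt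
        · have h1 : ¬ (i' ≤ i) := by
            simp [Fin.le_def, hi']
          simp only [hU, if_pos le_rfl, if_neg h1]
          ring
        · have h1 : i' ≤ j := by
            simp only [Fin.le_def, hi']
            exact hlt
          have hIio : Finset.Iio i' = insert i (Finset.Iio i) := by
            ext k
            simp only [Finset.mem_Iio, Finset.mem_insert, Fin.lt_def, Fin.ext_iff, hi', Fin.val_mk]
            omega
          rw [hU i j, hU i' j, if_pos hij, if_pos h1, hIio,
            Finset.prod_insert (by simp)]
          ring
      · have h1 : ¬ (i' ≤ j) := by
          intro h
          exact hij (le_trans (by simp [Fin.le_def, hi'] : i ≤ i') h)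
        simp [hU, hij, h1]
    · -- i is the last index: eps row i only has diagonal entry
      have hsum : (∑ k, eps i k * U k j) = lam i * U i j := by
        have hpt : ∀ k, eps i k * U k j = (if k = i then lam i * U i j else 0) := by
          intro k
          rcases eq_or_ne k i with rfl | h1
          · simp [heps]
          · have : (k : ℕ) ≠ (i : ℕ) + 1 := fun h => hi (h ▸ k.isLt)
            simp [heps, h1, Ne.symm h1, this]
        rw [Finset.sum_congr rfl (fun k _ => hpt k)]
        simp
      rw [hsum]
      by_cases hij : i ≤ j
      · have : i = j := le_antisymm hij (by
          have := j.isLt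
          have : (j : ℕ) ≤ (i : ℕ) := by omega
          exact this)
        subst this
        ring
      · simp [hU, hij]
  calc X * (L * U) = (X * L) * U := by rw [Matrix.mul_assoc]
    _ = L * (eps * U) := by rw [hXL, Matrix.mul_assoc]
    _ = L * (U * Matrix.diagonal lam) := by rw [key]
    _ = (L * U) * Matrix.diagonal lam := by rw [Matrix.mul_assoc]
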